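/- Let K be a connected compact subset of ℝ² with ℋ¹(K) < ∞, and let H be a nonempty compact subset of K having exactly p ≥ 2 connected components H¹, …, H^p. Then there exist a finite family of indices (σ_j)_{0 ≤ j ≤ ℓ} with {σ_0, …, σ_ℓ} = {1, …, p}, and a family (Γ_j)_{1 ≤ j ≤ ℓ} of connected components of K \ H, such that for each j = 1, …, ℓ the closure of Γ_j intersects both H^{σ_{j−1}} and H^{σ_j}. -/

import Mathlib

open MeasureTheory Filter Set

noncomputable section

/-- The plane `ℝ²`. -/
abbrev E2 : Type := EuclideanSpace ℝ (Fin 2)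

/-- `C` is a connected component of the set `S`. -/
def IsComponentOf (S C : Set E2) : Prop :=
  ∃ x ∈ S, C = connectedComponentIn S x

namespace ComponentsChainAux

/-- `V` is a (compact) clopen subset of `F` in the subspace topology. -/
def ClopenIn (F V : Set E2) : Prop :=
  V ⊆ F ∧ IsCompact V ∧ ∃ O : Set E2, IsOpen O ∧ V = O ∩ F

lemma isClosed_ccIn {F : Set E2} (hF : IsClosed F) (x : E2) :
    IsClosed (connectedComponentIn F x) := by
  by_cases hx : x ∈ F
  · have hsub : closure (connectedComponentIn F x) ⊆ connectedComponentIn F x :=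
      IsPreconnected.subset_connectedComponentIn
        (isPreconnected_connectedComponentIn.closure)
        (subset_closure (mem_connectedComponentIn hx))
        (closure_minimal (connectedComponentIn_subset _ _) hF)
    exact isClosed_of_closure_subset hsub
  · rw [connectedComponentIn_eq_empty hx]; exact isClosed_empty

/-- Šura-Bura: in a compact set `F`, a connected component can be separated from a disjoint
compact subset `S ⊆ F` by a set clopen in `F`. -/
lemma suraBura {F S : Set E2} (hF : IsCompact F) {x : E2} (hx : x ∈ F)
    (hS : IsCompact S) (hSF : S ⊆ F) (hdisj : connectedComponentIn F x ∩ S = ∅) :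
    ∃ V, ClopenIn F V ∧ connectedComponentIn F x ⊆ V ∧ V ∩ S = ∅ := by
  haveI : CompactSpace F := isCompact_iff_compactSpace.mp hF
  set x' : F := ⟨x, hx⟩ with hx'
  have hrepr := connectedComponentIn_eq_image hx
  set S' : Set F := ((↑) : F → E2) ⁻¹' S with hS'
  have hS'closed : IsClosed S' := hS.isClosed.preimage continuous_subtype_val
  have hdisj' : connectedComponent x' ∩ S' = ∅ := by
    ext y
    simp only [mem_inter_iff, mem_preimage, mem_empty_iff_false, iff_false, not_and]
    intro hy hyS
    have : (y : E2) ∈ connectedComponentIn F x ∩ S :=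
      ⟨hrepr ▸ mem_image_of_mem _ hy, hyS⟩
    rw [hdisj] at this
    exact this
  haveI : Nonempty {s : Set F // IsClopen s ∧ x' ∈ s} := ⟨⟨univ, isClopen_univ, mem_univ _⟩⟩
  obtain ⟨Z, hZ⟩ : ∃ Z : {s : Set F // IsClopen s ∧ x' ∈ s}, ↑Z.1 ∩ S' = ∅ := by
    by_contra hcon
    push_neg at hcon
    have hne : (⋂ Z : {s : Set F // IsClopen s ∧ x' ∈ s}, ((Z : Set F) ∩ S')).Nonempty := by
      apply IsCompact.nonempty_iInter_of_directed_nonempty_isCompact_isClosed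
      · rintro ⟨Z1, hZ1, hx1⟩ ⟨Z2, hZ2, hx2⟩
        exact ⟨⟨Z1 ∩ Z2, hZ1.inter hZ2, ⟨hx1, hx2⟩⟩,
          inter_subset_inter_left _ inter_subset_left,
          inter_subset_inter_left _ inter_subset_right⟩
      · intro Z; exact hcon Z
      · intro Z; exact ((Z.2.1.isClosed.inter hS'closed).isCompact)
      · intro Z; exact Z.2.1.isClosed.inter hS'closed
    rw [← iInter_inter, ← connectedComponent_eq_iInter_isClopen x', hdisj'] at hne
    exact hne.ne_empty rfl
  obtain ⟨O, hO, hOZ⟩ := isOpen_induced_iff.mp Z.2.1.isOpen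
  refine ⟨((↑) : F → E2) '' Z.1, ⟨?_, ?_, ⟨O, hO, ?_⟩⟩, ?_, ?_⟩
  · rintro y ⟨y', _, rfl⟩; exact y'.2
  · exact (Z.2.1.isClosed.isCompact).image continuous_subtype_val
  · rw [← hOZ, Subtype.image_preimage_coe, inter_comm]
  · rw [hrepr]
    apply image_mono
    rw [connectedComponent_eq_iInter_isClopen x']
    exact iInter_subset _ Z
  · ext y
    simp only [mem_inter_iff, mem_image, mem_empty_iff_false, iff_false, not_and]
    rintro ⟨y', hy', rfl⟩ hyS
    have : y' ∈ (Z : Set F) ∩ S' := ⟨hy', hyS⟩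
    rw [hZ] at this
    exact this

/-- Cut-wire theorem: if no component of the compact set `F` meets both `A` and `B`, then
there is a clopen-in-`F` set containing `F ∩ A` and disjoint from `B`. -/
lemma cutWire {F A B : Set E2} (hF : IsCompact F) (hA : IsClosed A) (hB : IsCompact B)
    (h : ∀ y ∈ F, ¬((connectedComponentIn F y ∩ A).Nonempty ∧
      (connectedComponentIn F y ∩ B).Nonempty)) :
    ∃ V, ClopenIn F V ∧ F ∩ A ⊆ V ∧ V ∩ B = ∅ := by
  classical
  have key : ∀ y : ↥(F ∩ A), ∃ VO : Set E2 × Set E2, ClopenIn F VO.1 ∧ (y : E2) ∈ VO.1 ∧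
      VO.1 ∩ B = ∅ ∧ IsOpen VO.2 ∧ VO.1 = VO.2 ∩ F := by
    rintro ⟨y, hyF, hyA⟩
    have hdis : connectedComponentIn F y ∩ (B ∩ F) = ∅ := by
      by_contra hc
      exact h y hyF ⟨⟨y, mem_connectedComponentIn hyF, hyA⟩,
        (nonempty_iff_ne_empty.mpr hc).mono (inter_subset_inter_right _ inter_subset_left)⟩
    obtain ⟨V, hV, hcomp, hVB⟩ :=
      suraBura hF hyF (hB.inter_right hF.isClosed) inter_subset_right hdis
    obtain ⟨O, hO, hVO⟩ := hV.2.2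
    refine ⟨⟨V, O⟩, hV, hcomp (mem_connectedComponentIn hyF), ?_, hO, hVO⟩
    ext z
    simp only [mem_inter_iff, mem_empty_iff_false, iff_false, not_and]
    intro hzV hzB
    have : z ∈ V ∩ (B ∩ F) := ⟨hzV, hzB, hV.1 hzV⟩
    rw [hVB] at this
    exact this
  choose VO hclop hmem hVB hOopen hVeq using key
  have hFA : IsCompact (F ∩ A) := hF.inter_right hA
  have hcover : F ∩ A ⊆ ⋃ y : ↥(F ∩ A), (VO y).2 := by
    intro z hz
    have : z ∈ (VO ⟨z, hz⟩).1 := hmem ⟨z, hz⟩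
    rw [hVeq ⟨z, hz⟩] at this
    exact mem_iUnion.mpr ⟨⟨z, hz⟩, this.1⟩
  obtain ⟨t, ht⟩ := hFA.elim_finite_subcover (fun y : ↥(F ∩ A) => (VO y).2)
    (fun y => hOopen y) hcover
  refine ⟨⋃ y ∈ t, (VO y).1, ⟨?_, ?_, ⟨⋃ y ∈ t, (VO y).2, ?_, ?_⟩⟩, ?_, ?_⟩
  · exact iUnion₂_subset fun y _ => (hclop y).1
  · exact t.finite_toSet.isCompact_biUnion fun y _ => (hclop y).2.1
  · exact isOpen_biUnion fun y _ => hOopen y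
  · rw [iUnion₂_inter]
    exact iUnion₂_congr fun y _ => hVeq y
  · intro z hz
    obtain ⟨y, hyt, hzO⟩ := mem_iUnion₂.mp (ht hz)
    refine mem_iUnion₂.mpr ⟨y, hyt, ?_⟩
    rw [hVeq y]
    exact ⟨hzO, hz.1⟩
  · ext z
    simp only [mem_inter_iff, mem_iUnion, mem_empty_iff_false, iff_false, not_and]
    rintro ⟨y, hyt, hzV⟩ hzB
    have : z ∈ (VO y).1 ∩ B := ⟨hzV, hzB⟩
    rw [hVB y] at this
    exact this

/-- A preconnected set cannot be covered by two disjoint compact sets meeting it. -/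
lemma no_sep {L P Q : Set E2} (hL : IsPreconnected L) (hP : IsCompact P) (hQ : IsCompact Q)
    (hPQ : Disjoint P Q) (hcover : L ⊆ P ∪ Q) (hPne : (L ∩ P).Nonempty)
    (hQne : (L ∩ Q).Nonempty) : False := by
  obtain ⟨u, v, hu, hv, hPu, hQv, huv⟩ := SeparatedNhds.of_isCompact_isCompact hP hQ hPQ
  obtain ⟨z, _, hzu, hzv⟩ := hL u v hu hv (fun z hz => (hcover hz).imp (@hPu z) (@hQv z))
    (hPne.mono (inter_subset_inter_right _ hPu)) (hQne.mono (inter_subset_inter_right _ hQv))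
  exact Set.disjoint_left.mp huv hzu hzv


/-- Main claim: if a compact connected set `K` meets two disjoint compact sets `A`, `B`,
then there is a nonempty connected subset of `K \ (A ∪ B)` whose closure meets both. -/
lemma main_claim {K A B : Set E2} (hK : IsCompact K) (hKconn : IsPreconnected K)
    (hA : IsCompact A) (hB : IsCompact B) (hAne : (K ∩ A).Nonempty) (hBne : (K ∩ B).Nonempty)
    (hAB : Disjoint A B) :
    ∃ S : Set E2, S.Nonempty ∧ IsPreconnected S ∧ S ⊆ K \ (A ∪ B) ∧
      (closure S ∩ A).Nonempty ∧ (closure S ∩ B).Nonempty := by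
  classical
  set 𝒮 : Set (Set E2) := {M | M ⊆ K ∧ IsCompact M ∧ IsPreconnected M ∧
    (M ∩ A).Nonempty ∧ (M ∩ B).Nonempty} with h𝒮
  -- Zorn: get a minimal continuum L meeting both A and B
  obtain ⟨L, -, hmin⟩ : ∃ m, m ⊆ K ∧ Minimal (· ∈ 𝒮) m := by
    apply zorn_superset_nonempty
    · intro c hc𝒮 hchain hcne
      haveI : Nonempty c := hcne.to_subtype
      have hdir : Directed (· ⊇ ·) (fun M : c => (M : Set E2)) := by
        rintro ⟨M, hM⟩ ⟨N, hN⟩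
        rcases hchain.total hM hN with h | h
        · exact ⟨⟨M, hM⟩, Subset.rfl, h⟩
        · exact ⟨⟨N, hN⟩, h, Subset.rfl⟩
      have hcomp : ∀ M : c, IsCompact (M : Set E2) := fun M => (hc𝒮 M.2).2.1
      have hT : ⋂₀ c = ⋂ M : c, (M : Set E2) := sInter_eq_iInter
      have hinterne : ∀ (D : Set E2), IsCompact D → (∀ M ∈ c, (M ∩ D).Nonempty) →
          ((⋂₀ c) ∩ D).Nonempty := by
        intro D hD hne
        have : (⋂ M : c, ((M : Set E2) ∩ D)).Nonempty := by
          apply IsCompact.nonempty_iInter_of_directed_nonempty_isCompact_isClosed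
          · rintro M N
            obtain ⟨P, h1, h2⟩ := hdir M N
            exact ⟨P, inter_subset_inter_left _ h1, inter_subset_inter_left _ h2⟩
          · exact fun M => hne M M.2
          · exact fun M => (hcomp M).inter_right hD.isClosed
          · exact fun M => ((hcomp M).inter_right hD.isClosed).isClosed
        rwa [← iInter_inter, ← hT] at this
      obtain ⟨M₀, hM₀⟩ := hcne
      have hTsub : ⋂₀ c ⊆ M₀ := sInter_subset_of_mem hM₀
      have hTcl : IsClosed (⋂₀ c) := isClosed_sInter fun M hM => ((hc𝒮 hM).2.1).isClosed
      have hTcomp : IsCompact (⋂₀ c) := (hc𝒮 hM₀).2.1.of_isClosed_subset hTcl hTsub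
      have hTA : ((⋂₀ c) ∩ A).Nonempty :=
        hinterne A hA fun M hM => (hc𝒮 hM).2.2.2.1
      have hTB : ((⋂₀ c) ∩ B).Nonempty :=
        hinterne B hB fun M hM => (hc𝒮 hM).2.2.2.2
      have hTpre : IsPreconnected (⋂₀ c) := by
        by_contra hnc
        unfold IsPreconnected at hnc
        push_neg at hnc
        obtain ⟨u, v, hu, hv, hsub, hne1, hne2, hempty⟩ := hnc
        have hnotin : ∀ z, z ∈ ⋂₀ c → z ∈ u → z ∈ v → False := fun z h1 h2 h3 =>
          absurd (show z ∈ (⋂₀ c) ∩ (u ∩ v) from ⟨h1, h2, h3⟩)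
            (by rw [hempty]; exact notMem_empty z)
        set P := ⋂₀ c \ v with hP
        set Q := ⋂₀ c \ u with hQ
        have hPQcover : ⋂₀ c ⊆ P ∪ Q := by
          intro z hz
          rcases hsub hz with h | h
          · exact Or.inl ⟨hz, fun hzv => hnotin z hz h hzv⟩
          · by_cases hzu : z ∈ u
            · exact (hnotin z hz hzu h).elim
            · exact Or.inr ⟨hz, hzu⟩
        have hPcomp : IsCompact P := hTcomp.diff hv
        have hQcomp : IsCompact Q := hTcomp.diff hu
        have hPQdisj : Disjoint P Q := by
          rw [Set.disjoint_left]
          rintro z ⟨hz, hzv⟩ ⟨-, hzu⟩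
          rcases hsub hz with h | h
          · exact hzu h
          · exact hzv h
        have hPne : P.Nonempty := by
          obtain ⟨z, hz, hzu⟩ := hne1
          exact ⟨z, hz, fun hzv => hnotin z hz hzu hzv⟩
        have hQne : Q.Nonempty := by
          obtain ⟨z, hz, hzv⟩ := hne2
          exact ⟨z, hz, fun hzu => hnotin z hz hzu hzv⟩
        obtain ⟨u', v', hu', hv', hPu', hQv', hu'v'⟩ :=
          SeparatedNhds.of_isCompact_isCompact hPcomp hQcomp hPQdisj
        have hstep : ∀ M ∈ c, (M \ (u' ∪ v')).Nonempty := by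
          intro M hM
          rw [nonempty_iff_ne_empty]
          intro hMempty
          have hMsub : M ⊆ u' ∪ v' := by
            intro z hz
            by_contra hz'
            exact absurd (show z ∈ M \ (u' ∪ v') from ⟨hz, hz'⟩)
              (by rw [hMempty]; exact notMem_empty z)
          obtain ⟨z, -, hzu', hzv'⟩ := (hc𝒮 hM).2.2.1 u' v' hu' hv' hMsub
            (hPne.mono fun z hz => ⟨sInter_subset_of_mem hM hz.1, hPu' hz⟩)
            (hQne.mono fun z hz => ⟨sInter_subset_of_mem hM hz.1, hQv' hz⟩)
          exact Set.disjoint_left.mp hu'v' hzu' hzv'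
        have hfinal : (⋂ M : c, ((M : Set E2) \ (u' ∪ v'))).Nonempty := by
          apply IsCompact.nonempty_iInter_of_directed_nonempty_isCompact_isClosed
          · rintro M N
            obtain ⟨R, h1, h2⟩ := hdir M N
            exact ⟨R, diff_subset_diff_left h1, diff_subset_diff_left h2⟩
          · exact fun M => hstep M M.2
          · exact fun M => (hcomp M).diff (hu'.union hv')
          · exact fun M => ((hcomp M).diff (hu'.union hv')).isClosed
        obtain ⟨z, hz⟩ := hfinal
        have hzT : z ∈ ⋂₀ c := by
          rw [hT]; exact mem_iInter.mpr fun M => (mem_iInter.mp hz M).1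
        have hzn : z ∉ u' ∪ v' := (mem_iInter.mp hz ⟨M₀, hM₀⟩).2
        rcases hPQcover hzT with h | h
        · exact hzn (Or.inl (hPu' h))
        · exact hzn (Or.inr (hQv' h))
      exact ⟨⋂₀ c, ⟨hTsub.trans (hc𝒮 hM₀).1, hTcomp, hTpre, hTA, hTB⟩,
        fun M hM => sInter_subset_of_mem hM⟩
    · exact ⟨Subset.rfl, hK, hKconn, hAne, hBne⟩
  obtain ⟨hLK, hLcomp, hLpre, hLA, hLB⟩ := hmin.1
  have hLclosed : IsClosed L := hLcomp.isClosed
  set W := L \ (A ∪ B) with hWdef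
  have hWL : W ⊆ L := diff_subset
  have hclWL : closure W ⊆ L := closure_minimal hWL hLclosed
  -- W is nonempty
  have hWne : W.Nonempty := by
    rw [nonempty_iff_ne_empty]
    intro h0
    have hLsub : L ⊆ A ∪ B := by
      intro z hz
      by_contra hz'
      exact absurd (show z ∈ W from ⟨hz, hz'⟩) (by rw [h0]; exact notMem_empty z)
    exact no_sep hLpre hA hB hAB hLsub hLA hLB
  -- closure W meets A
  have hclWA : (closure W ∩ A).Nonempty := by
    rw [nonempty_iff_ne_empty]
    intro h0
    apply no_sep hLpre (hLcomp.inter_right hA.isClosed)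
      ((hLcomp.of_isClosed_subset isClosed_closure hclWL).union (hLcomp.inter_right hB.isClosed))
      ?_ ?_ ?_ ?_
    · rw [Set.disjoint_left]
      rintro z ⟨hzL, hzA⟩ (hzW | ⟨-, hzB⟩)
      · exact absurd (show z ∈ closure W ∩ A from ⟨hzW, hzA⟩)
          (by rw [h0]; exact notMem_empty z)
      · exact Set.disjoint_left.mp hAB hzA hzB
    · intro z hz
      by_cases hzAB : z ∈ A ∪ B
      · rcases hzAB with h | h
        · exact Or.inl ⟨hz, h⟩
        · exact Or.inr (Or.inr ⟨hz, h⟩)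
      · exact Or.inr (Or.inl (subset_closure ⟨hz, hzAB⟩))
    · exact hLA.mono fun z hz => ⟨hz.1, hz.1, hz.2⟩
    · exact hLB.mono fun z hz => ⟨hz.1, Or.inr ⟨hz.1, hz.2⟩⟩
  -- closure W meets B
  have hclWB : (closure W ∩ B).Nonempty := by
    rw [nonempty_iff_ne_empty]
    intro h0
    apply no_sep hLpre (hLcomp.inter_right hB.isClosed)
      ((hLcomp.of_isClosed_subset isClosed_closure hclWL).union (hLcomp.inter_right hA.isClosed))
      ?_ ?_ ?_ ?_
    · rw [Set.disjoint_left]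
      rintro z ⟨hzL, hzB⟩ (hzW | ⟨-, hzA⟩)
      · exact absurd (show z ∈ closure W ∩ B from ⟨hzW, hzB⟩)
          (by rw [h0]; exact notMem_empty z)
      · exact Set.disjoint_left.mp hAB hzA hzB
    · intro z hz
      by_cases hzAB : z ∈ A ∪ B
      · rcases hzAB with h | h
        · exact Or.inr (Or.inr ⟨hz, h⟩)
        · exact Or.inl ⟨hz, h⟩
      · exact Or.inr (Or.inl (subset_closure ⟨hz, hzAB⟩))
    · exact hLB.mono fun z hz => ⟨hz.1, hz.1, hz.2⟩
    · exact hLA.mono fun z hz => ⟨hz.1, Or.inr ⟨hz.1, hz.2⟩⟩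
  -- W is preconnected
  have hWpre : IsPreconnected W := by
    by_contra hnc
    unfold IsPreconnected at hnc
    push_neg at hnc
    obtain ⟨u, v, hu, hv, hWuv, hWu, hWv, hWempty⟩ := hnc
    have hnotin : ∀ z, z ∈ W → z ∈ u → z ∈ v → False := fun z h1 h2 h3 =>
      absurd (show z ∈ W ∩ (u ∩ v) from ⟨h1, h2, h3⟩)
        (by rw [hWempty]; exact notMem_empty z)
    set P := W \ v with hPdef
    set Q := W \ u with hQdef
    have hPQW : W = P ∪ Q := by
      apply Subset.antisymm
      · intro z hz
        rcases hWuv hz with h | h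
        · exact Or.inl ⟨hz, fun hzv => hnotin z hz h hzv⟩
        · by_cases hzu : z ∈ u
          · exact (hnotin z hz hzu h).elim
          · exact Or.inr ⟨hz, hzu⟩
      · rintro z (⟨h, -⟩ | ⟨h, -⟩) <;> exact h
    have hPu : P ⊆ u := fun z hz => (hWuv hz.1).resolve_right hz.2
    have hQv : Q ⊆ v := fun z hz => (hWuv hz.1).resolve_left hz.2
    have hPne : P.Nonempty := by
      obtain ⟨z, hzW, hzu⟩ := hWu
      exact ⟨z, hzW, fun hzv => hnotin z hzW hzu hzv⟩
    have hQne : Q.Nonempty := by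
      obtain ⟨z, hzW, hzv⟩ := hWv
      exact ⟨z, hzW, fun hzu => hnotin z hzW hzu hzv⟩
    have hPL : closure P ⊆ L := closure_minimal (fun z hz => hWL hz.1) hLclosed
    have hQL : closure Q ⊆ L := closure_minimal (fun z hz => hWL hz.1) hLclosed
    have hclPv : closure P ⊆ vᶜ :=
      closure_minimal (fun z hz => hz.2) (isClosed_compl_iff.mpr hv)
    have hclQu : closure Q ⊆ uᶜ :=
      closure_minimal (fun z hz => hz.2) (isClosed_compl_iff.mpr hu)
    have hclPQ : closure P ∩ Q = ∅ := by
      ext z; simp only [mem_inter_iff, mem_empty_iff_false, iff_false, not_and]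
      exact fun hz hzQ => absurd (hQv hzQ) (hclPv hz)
    have hclQP : closure Q ∩ P = ∅ := by
      ext z; simp only [mem_inter_iff, mem_empty_iff_false, iff_false, not_and]
      exact fun hz hzP => absurd (hPu hzP) (hclQu hz)
    have hPbar_sub : closure P ⊆ P ∪ (A ∪ B) := by
      intro z hz
      by_cases hzAB : z ∈ A ∪ B
      · exact Or.inr hzAB
      · have hzW : z ∈ W := ⟨hPL hz, hzAB⟩
        rw [hPQW] at hzW
        rcases hzW with h | h
        · exact Or.inl h
        · exact absurd (show z ∈ closure P ∩ Q from ⟨hz, h⟩)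
            (by rw [hclPQ]; exact notMem_empty z)
    have hPbar_comp : IsCompact (closure P) := hLcomp.of_isClosed_subset isClosed_closure hPL
    have hQbar_comp : IsCompact (closure Q) := hLcomp.of_isClosed_subset isClosed_closure hQL
    -- no component of closure P (resp. closure Q) meets both A and B
    have hcwP : ∀ y ∈ closure P, ¬((connectedComponentIn (closure P) y ∩ A).Nonempty ∧
        (connectedComponentIn (closure P) y ∩ B).Nonempty) := by
      rintro y hy ⟨hA', hB'⟩
      set C := connectedComponentIn (closure P) y with hC
      have hCsub : C ⊆ closure P := connectedComponentIn_subset _ _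
      have hCcomp : IsCompact C :=
        hPbar_comp.of_isClosed_subset (isClosed_ccIn isClosed_closure y) hCsub
      have hC𝒮 : C ∈ 𝒮 := ⟨hCsub.trans (hPL.trans hLK), hCcomp,
        isPreconnected_connectedComponentIn, hA', hB'⟩
      have hLC : L ⊆ C := hmin.2 hC𝒮 (hCsub.trans hPL)
      obtain ⟨q, hq⟩ := hQne
      exact absurd (show q ∈ closure P ∩ Q from ⟨hCsub (hLC (hWL (hPQW ▸ Or.inr hq))), hq⟩)
        (by rw [hclPQ]; exact notMem_empty q)
    have hcwQ : ∀ y ∈ closure Q, ¬((connectedComponentIn (closure Q) y ∩ A).Nonempty ∧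
        (connectedComponentIn (closure Q) y ∩ B).Nonempty) := by
      rintro y hy ⟨hA', hB'⟩
      set C := connectedComponentIn (closure Q) y with hC
      have hCsub : C ⊆ closure Q := connectedComponentIn_subset _ _
      have hCcomp : IsCompact C :=
        hQbar_comp.of_isClosed_subset (isClosed_ccIn isClosed_closure y) hCsub
      have hC𝒮 : C ∈ 𝒮 := ⟨hCsub.trans (hQL.trans hLK), hCcomp,
        isPreconnected_connectedComponentIn, hA', hB'⟩
      have hLC : L ⊆ C := hmin.2 hC𝒮 (hCsub.trans hQL)
      obtain ⟨q, hq⟩ := hPne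
      exact absurd (show q ∈ closure Q ∩ P from ⟨hCsub (hLC (hWL (hPQW ▸ Or.inl hq))), hq⟩)
        (by rw [hclQP]; exact notMem_empty q)
    obtain ⟨PA, hPAclop, hPAsub, hPAB⟩ := cutWire hPbar_comp hA.isClosed hB hcwP
    obtain ⟨QA, hQAclop, hQAsub, hQAB⟩ := cutWire hQbar_comp hA.isClosed hB hcwQ
    set PB := closure P \ PA with hPBdef
    set QB := closure Q \ QA with hQBdef
    set H2 := L \ (closure P ∪ closure Q) with hH2def
    have hH2AB : H2 ⊆ A ∪ B := by
      rintro z ⟨hzL, hzn⟩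
      by_contra hzAB
      have hzW : z ∈ W := ⟨hzL, hzAB⟩
      rw [hPQW] at hzW
      rcases hzW with h | h
      · exact hzn (Or.inl (subset_closure h))
      · exact hzn (Or.inr (subset_closure h))
    set MA := PA ∪ QA ∪ (H2 ∩ A) with hMAdef
    set MB := PB ∪ QB ∪ (H2 ∩ B) with hMBdef
    have hPAP : PA ⊆ closure P := hPAclop.1
    have hQAQ : QA ⊆ closure Q := hQAclop.1
    have hcoverL : L ⊆ MA ∪ MB := by
      intro z hz
      by_cases hzP : z ∈ closure P
      · by_cases hzPA : z ∈ PA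
        · exact Or.inl (Or.inl (Or.inl hzPA))
        · exact Or.inr (Or.inl (Or.inl ⟨hzP, hzPA⟩))
      · by_cases hzQ : z ∈ closure Q
        · by_cases hzQA : z ∈ QA
          · exact Or.inl (Or.inl (Or.inr hzQA))
          · exact Or.inr (Or.inl (Or.inr ⟨hzQ, hzQA⟩))
        · have hzH2 : z ∈ H2 := ⟨hz, fun h => h.elim hzP hzQ⟩
          rcases hH2AB hzH2 with h | h
          · exact Or.inl (Or.inr ⟨hzH2, h⟩)
          · exact Or.inr (Or.inr ⟨hzH2, h⟩)
    have hPBA : PB ∩ A = ∅ := by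
      ext z; simp only [mem_inter_iff, mem_empty_iff_false, iff_false, not_and]
      rintro ⟨hzP, hzPA⟩ hzA
      exact hzPA (hPAsub ⟨hzP, hzA⟩)
    have hQBA : QB ∩ A = ∅ := by
      ext z; simp only [mem_inter_iff, mem_empty_iff_false, iff_false, not_and]
      rintro ⟨hzQ, hzQA⟩ hzA
      exact hzQA (hQAsub ⟨hzQ, hzA⟩)
    have hPQbarAB : closure P ∩ closure Q ⊆ A ∪ B := by
      rintro z ⟨hzP, hzQ⟩
      rcases hPbar_sub hzP with h | h
      · exact absurd (show z ∈ closure Q ∩ P from ⟨hzQ, h⟩)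
          (by rw [hclQP]; exact notMem_empty z)
      · exact h
    have hH2P : ∀ z, z ∈ H2 → z ∈ closure P → False := by
      rintro z ⟨-, hzn⟩ hzP
      exact hzn (Or.inl hzP)
    have hH2Q : ∀ z, z ∈ H2 → z ∈ closure Q → False := by
      rintro z ⟨-, hzn⟩ hzQ
      exact hzn (Or.inr hzQ)
    have hdisjM : MA ∩ MB = ∅ := by
      ext z; simp only [mem_inter_iff, mem_empty_iff_false, iff_false, not_and]
      rintro (hzA | hzA) (hzB | hzB)
      · rcases hzA with hzPA | hzQA <;> rcases hzB with hzPB | hzQB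
        · exact hzPB.2 hzPA
        · rcases hPQbarAB ⟨hPAP hzPA, hzQB.1⟩ with h | h
          · exact hzQB.2 (hQAsub ⟨hzQB.1, h⟩)
          · exact absurd (show z ∈ PA ∩ B from ⟨hzPA, h⟩)
              (by rw [hPAB]; exact notMem_empty z)
        · rcases hPQbarAB ⟨hzPB.1, hQAQ hzQA⟩ with h | h
          · exact hzPB.2 (hPAsub ⟨hzPB.1, h⟩)
          · exact absurd (show z ∈ QA ∩ B from ⟨hzQA, h⟩)
              (by rw [hQAB]; exact notMem_empty z)
        · exact hzQB.2 hzQA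
      · rcases hzA with h | h
        · exact hH2P z hzB.1 (hPAP h)
        · exact hH2Q z hzB.1 (hQAQ h)
      · rcases hzB with h | h
        · exact hH2P z hzA.1 h.1
        · exact hH2Q z hzA.1 h.1
      · exact Set.disjoint_left.mp hAB hzA.2 hzB.2
    have hPAcl : IsClosed PA := hPAclop.2.1.isClosed
    have hQAcl : IsClosed QA := hQAclop.2.1.isClosed
    have hPBcl : IsClosed PB := by
      obtain ⟨O, hO, hVO⟩ := hPAclop.2.2
      have heq : PB = closure P ∩ Oᶜ := by
        ext z
        constructor
        · rintro ⟨hz, hzn⟩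
          refine ⟨hz, fun hzO => hzn ?_⟩
          rw [hVO]; exact ⟨hzO, hz⟩
        · rintro ⟨hz, hzn⟩
          refine ⟨hz, fun hzPA => hzn ?_⟩
          rw [hVO] at hzPA; exact hzPA.1
      rw [heq]
      exact isClosed_closure.inter (isClosed_compl_iff.mpr hO)
    have hQBcl : IsClosed QB := by
      obtain ⟨O, hO, hVO⟩ := hQAclop.2.2
      have heq : QB = closure Q ∩ Oᶜ := by
        ext z
        constructor
        · rintro ⟨hz, hzn⟩
          refine ⟨hz, fun hzO => hzn ?_⟩
          rw [hVO]; exact ⟨hzO, hz⟩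
        · rintro ⟨hz, hzn⟩
          refine ⟨hz, fun hzQA => hzn ?_⟩
          rw [hVO] at hzQA; exact hzQA.1
      rw [heq]
      exact isClosed_closure.inter (isClosed_compl_iff.mpr hO)
    have hclMAsub : closure MA ⊆ PA ∪ QA ∪ A := by
      have h1 : closure MA = (closure PA ∪ closure QA) ∪ closure (H2 ∩ A) := by
        rw [hMAdef, closure_union, closure_union]
      rw [h1, hPAcl.closure_eq, hQAcl.closure_eq]
      exact union_subset_union_right _ (closure_minimal (fun z hz => hz.2) hA.isClosed)
    have hclMBsub : closure MB ⊆ PB ∪ QB ∪ B := by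
      have h1 : closure MB = (closure PB ∪ closure QB) ∪ closure (H2 ∩ B) := by
        rw [hMBdef, closure_union, closure_union]
      rw [h1, hPBcl.closure_eq, hQBcl.closure_eq]
      exact union_subset_union_right _ (closure_minimal (fun z hz => hz.2) hB.isClosed)
    have hMAeq : MA = L ∩ closure MA := by
      apply Subset.antisymm
      · intro z hz
        refine ⟨?_, subset_closure hz⟩
        rcases hz with (h | h) | h
        · exact hPL (hPAP h)
        · exact hQL (hQAQ h)
        · exact h.1.1
      · rintro z ⟨hzL, hzcl⟩
        rcases hcoverL hzL with h | h
        · exact h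
        · rcases hclMAsub hzcl with h' | h'
          · rcases h' with h'' | h''
            · exact Or.inl (Or.inl h'')
            · exact Or.inl (Or.inr h'')
          · -- z ∈ A and z ∈ MB : contradiction
            exfalso
            rcases h with (hb | hb) | hb
            · exact absurd (show z ∈ PB ∩ A from ⟨hb, h'⟩)
                (by rw [hPBA]; exact notMem_empty z)
            · exact absurd (show z ∈ QB ∩ A from ⟨hb, h'⟩)
                (by rw [hQBA]; exact notMem_empty z)
            · exact Set.disjoint_left.mp hAB h' hb.2
    have hMBeq : MB = L ∩ closure MB := by
      apply Subset.antisymm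
      · intro z hz
        refine ⟨?_, subset_closure hz⟩
        rcases hz with (h | h) | h
        · exact hPL h.1
        · exact hQL h.1
        · exact h.1.1
      · rintro z ⟨hzL, hzcl⟩
        rcases hcoverL hzL with h | h
        · rcases hclMBsub hzcl with h' | h'
          · rcases h' with h'' | h''
            · exfalso
              exact absurd (show z ∈ MA ∩ MB from ⟨h, Or.inl (Or.inl h'')⟩)
                (by rw [hdisjM]; exact notMem_empty z)
            · exfalso
              exact absurd (show z ∈ MA ∩ MB from ⟨h, Or.inl (Or.inr h'')⟩)
                (by rw [hdisjM]; exact notMem_empty z)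
          · -- z ∈ B and z ∈ MA : contradiction
            exfalso
            rcases h with (ha | ha) | ha
            · exact absurd (show z ∈ PA ∩ B from ⟨ha, h'⟩)
                (by rw [hPAB]; exact notMem_empty z)
            · exact absurd (show z ∈ QA ∩ B from ⟨ha, h'⟩)
                (by rw [hQAB]; exact notMem_empty z)
            · exact Set.disjoint_left.mp hAB ha.2 h'
        · exact h
    have hMAcomp : IsCompact MA := by
      rw [hMAeq]; exact hLcomp.inter_right isClosed_closure
    have hMBcomp : IsCompact MB := by
      rw [hMBeq]; exact hLcomp.inter_right isClosed_closure
    have hLAsubMA : L ∩ A ⊆ MA := by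
      rintro z ⟨hzL, hzA⟩
      by_cases hzP : z ∈ closure P
      · exact Or.inl (Or.inl (hPAsub ⟨hzP, hzA⟩))
      · by_cases hzQ : z ∈ closure Q
        · exact Or.inl (Or.inr (hQAsub ⟨hzQ, hzA⟩))
        · exact Or.inr ⟨⟨hzL, fun h => h.elim hzP hzQ⟩, hzA⟩
    have hLBsubMB : L ∩ B ⊆ MB := by
      rintro z ⟨hzL, hzB⟩
      by_cases hzP : z ∈ closure P
      · refine Or.inl (Or.inl ⟨hzP, fun h => ?_⟩)
        exact absurd (show z ∈ PA ∩ B from ⟨h, hzB⟩) (by rw [hPAB]; exact notMem_empty z)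
      · by_cases hzQ : z ∈ closure Q
        · refine Or.inl (Or.inr ⟨hzQ, fun h => ?_⟩)
          exact absurd (show z ∈ QA ∩ B from ⟨h, hzB⟩) (by rw [hQAB]; exact notMem_empty z)
        · exact Or.inr ⟨⟨hzL, fun h => h.elim hzP hzQ⟩, hzB⟩
    exact no_sep hLpre hMAcomp hMBcomp (disjoint_iff_inter_eq_empty.mpr hdisjM) hcoverL
      (hLA.mono fun z hz => ⟨hz.1, hLAsubMA hz⟩) (hLB.mono fun z hz => ⟨hz.1, hLBsubMB hz⟩)
  exact ⟨W, hWne, hWpre, diff_subset_diff_left hLK, hclWA, hclWB⟩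


section Walk

variable {α : Type*} {R : α → α → Prop}

lemma chain_append : ∀ {a : α} {l1 l2 : List α}, List.Chain R a l1 →
    List.Chain R ((a :: l1).getLast (List.cons_ne_nil _ _)) l2 → List.Chain R a (l1 ++ l2) := by
  intro a l1
  induction l1 generalizing a with
  | nil => intro l2 _ h2; simpa using h2
  | cons x t ih =>
    intro l2 h1 h2
    have h1 : R a x ∧ List.Chain R x t := List.isChain_cons_cons.mp h1
    refine List.Chain.cons h1.1 (ih h1.2 ?_)
    rwa [List.getLast_cons (List.cons_ne_nil _ _)] at h2

lemma walk_to {a b : α} (h : Relation.ReflTransGen R a b) :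
    ∃ l : List α, List.Chain R a l ∧ (a :: l).getLast (List.cons_ne_nil _ _) = b := by
  induction h with
  | refl => exact ⟨[], List.Chain.nil, rfl⟩
  | @tail b' c hab hbc ih =>
    obtain ⟨l, hl, hlast⟩ := ih
    refine ⟨l ++ [c], chain_append hl ?_, ?_⟩
    · rw [hlast]; exact List.Chain.cons hbc List.Chain.nil
    · simp [List.getLast_append]

lemma cover_walk (hconn : ∀ a b : α, Relation.ReflTransGen R a b) :
    ∀ (s : List α) (a : α), ∃ l : List α, List.Chain R a l ∧ ∀ v ∈ s, v ∈ a :: l := by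
  intro s
  induction s with
  | nil => exact fun a => ⟨[], List.Chain.nil, by simp⟩
  | cons w t ih =>
    intro a
    obtain ⟨l1, hl1, hlast⟩ := walk_to (hconn a w)
    obtain ⟨l2, hl2, hmem⟩ := ih w
    refine ⟨l1 ++ l2, chain_append hl1 (hlast ▸ hl2), ?_⟩
    have hwmem : w ∈ a :: (l1 ++ l2) := by
      have : w ∈ a :: l1 := hlast ▸ List.getLast_mem (List.cons_ne_nil _ _)
      rcases List.mem_cons.mp this with h | h
      · exact List.mem_cons.mpr (Or.inl h)
      · exact List.mem_cons.mpr (Or.inr (List.mem_append.mpr (Or.inl h)))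
    intro v hv
    rcases List.mem_cons.mp hv with rfl | hvt
    · exact hwmem
    · rcases List.mem_cons.mp (hmem v hvt) with rfl | h
      · exact hwmem
      · exact List.mem_cons.mpr (Or.inr (List.mem_append.mpr (Or.inr h)))

end Walk

end ComponentsChainAux

theorem components_chain (K : Set E2) (hKc : IsCompact K) (hKconn : IsConnected K)
    (hKfin : μH[1] K < ⊤)
    (p : ℕ) (hp : 2 ≤ p)
    (H : Set E2) (hHc : IsCompact H) (hHne : H.Nonempty) (hHK : H ⊆ K)
    (Hc : Fin p → Set E2)
    (hcomp : ∀ i, IsComponentOf H (Hc i))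
    (hinj : Function.Injective Hc)
    (hcover : H = ⋃ i, Hc i) :
    ∃ (ℓ : ℕ) (σ : Fin (ℓ + 1) → Fin p), Function.Surjective σ ∧
      ∃ Γ : Fin ℓ → Set E2,
        (∀ j, IsComponentOf (K \ H) (Γ j)) ∧
        ∀ j : Fin ℓ,
          (closure (Γ j) ∩ Hc (σ j.castSucc)).Nonempty ∧
          (closure (Γ j) ∩ Hc (σ j.succ)).Nonempty := by
  classical
  have hHcl : IsClosed H := hHc.isClosed
  have hHcfacts : ∀ i, Hc i ⊆ H ∧ (Hc i).Nonempty ∧ IsCompact (Hc i) := by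
    intro i
    obtain ⟨x, hx, he⟩ := hcomp i
    refine ⟨he ▸ connectedComponentIn_subset _ _, ⟨x, he ▸ mem_connectedComponentIn hx⟩, ?_⟩
    rw [he]
    exact hHc.of_isClosed_subset (ComponentsChainAux.isClosed_ccIn hHcl x)
      (connectedComponentIn_subset _ _)
  have hHcdisj : ∀ i j, i ≠ j → ∀ z, z ∈ Hc i → z ∈ Hc j → False := by
    intro i j hij z hzi hzj
    obtain ⟨x, hx, hei⟩ := hcomp i
    obtain ⟨y, hy, hej⟩ := hcomp j
    apply hij
    apply hinj
    rw [hei] at hzi ⊢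
    rw [hej] at hzj ⊢
    rw [connectedComponentIn_eq hzi, connectedComponentIn_eq hzj]
  set R : Fin p → Fin p → Prop := fun i j => ∃ Γ, IsComponentOf (K \ H) Γ ∧
    (closure Γ ∩ Hc i).Nonempty ∧ (closure Γ ∩ Hc j).Nonempty with hR
  have hconnR : ∀ i j, Relation.ReflTransGen R i j := by
    intro i j
    by_contra hij
    set As : Set (Fin p) := {k | Relation.ReflTransGen R i k} with hAs
    have hiAs : i ∈ As := Relation.ReflTransGen.refl
    have hjAs : j ∈ Asᶜ := hij
    set HA : Set E2 := ⋃ k ∈ As, Hc k with hHA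
    set HB : Set E2 := ⋃ k ∈ Asᶜ, Hc k with hHB
    have hHAc : IsCompact HA := (Set.toFinite As).isCompact_biUnion fun k _ => (hHcfacts k).2.2
    have hHBc : IsCompact HB := (Set.toFinite Asᶜ).isCompact_biUnion fun k _ => (hHcfacts k).2.2
    have hunion : HA ∪ HB = H := by
      rw [hcover]
      apply Subset.antisymm
      · rintro z (hz | hz)
        · obtain ⟨k, -, hk⟩ := mem_iUnion₂.mp hz
          exact mem_iUnion.mpr ⟨k, hk⟩
        · obtain ⟨k, -, hk⟩ := mem_iUnion₂.mp hz
          exact mem_iUnion.mpr ⟨k, hk⟩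
      · intro z hz
        obtain ⟨k, hk⟩ := mem_iUnion.mp hz
        by_cases hkAs : k ∈ As
        · exact Or.inl (mem_biUnion hkAs hk)
        · exact Or.inr (mem_biUnion hkAs hk)
    have hdisjAB : Disjoint HA HB := by
      rw [Set.disjoint_left]
      intro z hzA hzB
      obtain ⟨k, hkAs, hk⟩ := mem_iUnion₂.mp hzA
      obtain ⟨k', hk'As, hk'⟩ := mem_iUnion₂.mp hzB
      exact hHcdisj k k' (fun h => hk'As (h ▸ hkAs)) z hk hk'
    have hAne : (K ∩ HA).Nonempty := by
      obtain ⟨z, hz⟩ := (hHcfacts i).2.1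
      exact ⟨z, hHK ((hHcfacts i).1 hz), mem_biUnion hiAs hz⟩
    have hBne : (K ∩ HB).Nonempty := by
      obtain ⟨z, hz⟩ := (hHcfacts j).2.1
      exact ⟨z, hHK ((hHcfacts j).1 hz), mem_biUnion hjAs hz⟩
    obtain ⟨S, hSne, hSpre, hSsub, hSA, hSB⟩ := ComponentsChainAux.main_claim hKc
      hKconn.isPreconnected hHAc hHBc hAne hBne hdisjAB
    rw [hunion] at hSsub
    obtain ⟨x, hxS⟩ := hSne
    set Γ0 := connectedComponentIn (K \ H) x with hΓ0
    have hSsubΓ : S ⊆ Γ0 := hSpre.subset_connectedComponentIn hxS hSsub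
    obtain ⟨a, hacl, haHA⟩ := hSA
    obtain ⟨b, hbcl, hbHB⟩ := hSB
    obtain ⟨k, hkAs, hak⟩ := mem_iUnion₂.mp haHA
    obtain ⟨k', hk'As, hbk'⟩ := mem_iUnion₂.mp hbHB
    have hRkk' : R k k' := ⟨Γ0, ⟨x, hSsub hxS, rfl⟩,
      ⟨a, closure_mono hSsubΓ hacl, hak⟩, ⟨b, closure_mono hSsubΓ hbcl, hbk'⟩⟩
    exact hk'As ((hkAs : Relation.ReflTransGen R i k).tail hRkk')
  have hp1 : 0 < p := by omega
  obtain ⟨l0, hchain, hcov⟩ := ComponentsChainAux.cover_walk hconnR (List.finRange p) ⟨0, hp1⟩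
  set l : List (Fin p) := ⟨0, hp1⟩ :: l0 with hl
  have hlen : l.length = l0.length + 1 := rfl
  refine ⟨l0.length, fun j => l.get (Fin.cast hlen.symm j), ?_, ?_⟩
  · intro v
    have hv : v ∈ l := hcov v (List.mem_finRange v)
    obtain ⟨n, hn⟩ := List.mem_iff_get.mp hv
    refine ⟨Fin.cast hlen n, ?_⟩
    show l.get (Fin.cast hlen.symm (Fin.cast hlen n)) = v
    have heq : Fin.cast hlen.symm (Fin.cast hlen n) = n := by
      apply Fin.ext; simp
    rw [heq]
    exact hn
  · have hchain' : List.Chain' R l := hchain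
    have hget : ∀ (i : ℕ) (h : i < l.length - 1), R (l.get ⟨i, by omega⟩) (l.get ⟨i + 1, by omega⟩) :=
      fun i h => List.isChain_iff_getElem.mp hchain' i (by omega)
    have hedge : ∀ j : Fin l0.length,
        R (l.get (Fin.cast hlen.symm j.castSucc)) (l.get (Fin.cast hlen.symm j.succ)) := by
      intro j
      have hj : (j : ℕ) < l.length - 1 := by
        rw [hlen]; simp
      have h := hget j.val hj
      have e1 : Fin.cast hlen.symm j.castSucc = ⟨(j : ℕ), by rw [hlen]; omega⟩ := by
        apply Fin.ext; simp
      have e2 : Fin.cast hlen.symm j.succ = ⟨(j : ℕ) + 1, by rw [hlen]; omega⟩ := by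
        apply Fin.ext; simp
      rw [e1, e2]
      exact h
    choose Γ hΓ using hedge
    exact ⟨Γ, fun j => (hΓ j).1, fun j => ⟨(hΓ j).2.1, (hΓ j).2.2⟩⟩
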